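/- Let n, p ≥ 1 and C ≥ 1 be integers and α ∈ (0,1). Let (E_k)_{k≥0} be edge sets E_k ⊆ {1,…,n}×{1,…,n} with (i,i) ∈ E_k for all i, k, such that for every k ≥ 0 the directed graph with edge set ∪_{l=k}^{k+C−1} E_l is strongly connected. Let (A_k) be row-stochastic n×n matrices with [A_k]_{ij} > 0 ⇔ (i,j) ∈ E_k and [A_k]_{ij} ≥ α on edges, and let (φ_k) be an absolute probability sequence for (A_k). Set Q_A = 2n(1+α^{−nC})/(1−α^{nC}), and let C̄_A ≥ C be an integer such that γ_A := Q_A (1−α^{nC})^{(C̄_A−1)/(nC)} < 1. Then for every k ≥ C̄_A−1 and every b ∈ (ℝ^p)^n, setting a = (A_k A_{k−1} ⋯ A_{k−C̄_A+1} ⊗ I_p) b, one has ‖((I_n − 1_n φ_{k+1}ᵀ) ⊗ I_p) a‖ ≤ γ_A ‖((I_n − 1_n φ_{k−C̄_A+1}ᵀ) ⊗ I_p) b‖. -/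

import Mathlib

open Matrix

/-- The block ℓ₂ norm on `(ℝ^p)^n`: `‖x‖ = (∑_i ‖x^i‖₂²)^{1/2}`. -/
noncomputable def bnorm {n p : ℕ} (x : Fin n → EuclideanSpace ℝ (Fin p)) : ℝ :=
  Real.sqrt (∑ i, ‖x i‖ ^ 2)

/-- The blockwise action `(M ⊗ I_p)` of an `n×n` matrix on `(ℝ^p)^n`:
`((M ⊗ I_p)x)^i = ∑_j M_{ij} x^j`. -/
noncomputable def mapp {n p : ℕ} (M : Matrix (Fin n) (Fin n) ℝ)
    (x : Fin n → EuclideanSpace ℝ (Fin p)) : Fin n → EuclideanSpace ℝ (Fin p) :=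
  fun i => ∑ j, M i j • x j

/-- The matrix `I_n − 1_n φᵀ`. -/
noncomputable def proj {n : ℕ} (φ : Fin n → ℝ) : Matrix (Fin n) (Fin n) ℝ :=
  1 - Matrix.vecMulVec (fun _ => 1) φ

/-- The backward matrix product `A_hi ⋯ A_lo` (empty product, when `hi + 1 ≤ lo`, is `I`). -/
noncomputable def bprod {n : ℕ} (A : ℕ → Matrix (Fin n) (Fin n) ℝ) (lo hi : ℕ) :
    Matrix (Fin n) (Fin n) ℝ :=
  (((List.range (hi + 1 - lo)).map fun t => A (lo + t)).reverse).prod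

/-- A directed graph on `Fin n` with edge set `E ⊆ Fin n × Fin n` is strongly connected:
for every pair of distinct vertices `i, j` there is a directed path from `j` to `i`,
where an edge `(i, j) ∈ E` means `j ⟶ i`. -/
def StronglyConnected {n : ℕ} (E : Set (Fin n × Fin n)) : Prop :=
  ∀ i j : Fin n, i ≠ j → Relation.TransGen (fun a b => (b, a) ∈ E) j i

open Matrix Finset

/-! ### Auxiliary lemmas -/

noncomputable def pprod {n : ℕ} (A : ℕ → Matrix (Fin n) (Fin n) ℝ) (lo L : ℕ) :
    Matrix (Fin n) (Fin n) ℝ :=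
  (((List.range L).map fun t => A (lo + t)).reverse).prod

lemma pprod_zero {n : ℕ} (A : ℕ → Matrix (Fin n) (Fin n) ℝ) (lo : ℕ) :
    pprod A lo 0 = 1 := by simp [pprod]

lemma pprod_succ {n : ℕ} (A : ℕ → Matrix (Fin n) (Fin n) ℝ) (lo L : ℕ) :
    pprod A lo (L + 1) = A (lo + L) * pprod A lo L := by
  simp [pprod, List.range_succ]

lemma pprod_add {n : ℕ} (A : ℕ → Matrix (Fin n) (Fin n) ℝ) (lo M L : ℕ) :
    pprod A lo (M + L) = pprod A (lo + M) L * pprod A lo M := by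
  induction L with
  | zero => simp [pprod_zero]
  | succ L ih =>
      rw [Nat.add_succ, pprod_succ, ih, pprod_succ, ← add_assoc, mul_assoc]

lemma pprod_nonneg {n : ℕ} {A : ℕ → Matrix (Fin n) (Fin n) ℝ}
    (hAnn : ∀ k i j, 0 ≤ A k i j) (lo L : ℕ) (i j : Fin n) :
    0 ≤ pprod A lo L i j := by
  induction L generalizing i j with
  | zero => rw [pprod_zero]; by_cases h : i = j <;> simp [Matrix.one_apply, h]
  | succ L ih =>
      rw [pprod_succ, Matrix.mul_apply]
      exact Finset.sum_nonneg fun a _ => mul_nonneg (hAnn _ _ _) (ih a j)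

lemma pprod_rowsum {n : ℕ} {A : ℕ → Matrix (Fin n) (Fin n) ℝ}
    (hArow : ∀ k i, ∑ j, A k i j = 1) (lo L : ℕ) (i : Fin n) :
    ∑ j, pprod A lo L i j = 1 := by
  induction L generalizing i with
  | zero => rw [pprod_zero]; simp [Matrix.one_apply]
  | succ L ih =>
      rw [pprod_succ]
      simp only [Matrix.mul_apply]
      rw [Finset.sum_comm]
      have : ∀ a ∈ Finset.univ, ∑ j, A (lo + L) i a * pprod A lo L a j = A (lo + L) i a := by
        intro a _
        rw [← Finset.mul_sum, ih a, mul_one]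
      rw [Finset.sum_congr rfl this, hArow]

lemma pprod_le_one {n : ℕ} {A : ℕ → Matrix (Fin n) (Fin n) ℝ}
    (hAnn : ∀ k i j, 0 ≤ A k i j) (hArow : ∀ k i, ∑ j, A k i j = 1)
    (lo L : ℕ) (i j : Fin n) : pprod A lo L i j ≤ 1 := by
  have := pprod_rowsum hArow lo L i
  calc pprod A lo L i j ≤ ∑ j', pprod A lo L i j' :=
        Finset.single_le_sum (fun a _ => pprod_nonneg hAnn lo L i a) (Finset.mem_univ j)
    _ = 1 := this

lemma transGen_cross {γ : Type*} {r : γ → γ → Prop} {S : Set γ} {x y : γ}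
    (h : Relation.TransGen r x y) :
    x ∈ S → y ∉ S → ∃ a b, a ∈ S ∧ b ∉ S ∧ r a b := by
  induction h with
  | single h1 => intro hx hy; exact ⟨_, _, hx, hy, h1⟩
  | @tail c d hxc hcd ih =>
      intro hx hd
      by_cases hc : c ∈ S
      · exact ⟨c, d, hc, hd, hcd⟩
      · exact ih hx hc

lemma mapp_mapp {n p : ℕ} (M N : Matrix (Fin n) (Fin n) ℝ)
    (b : Fin n → EuclideanSpace ℝ (Fin p)) :
    mapp M (mapp N b) = mapp (M * N) b := by
  funext i
  simp only [mapp, Matrix.mul_apply, Finset.smul_sum, smul_smul]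
  rw [Finset.sum_comm]
  congr 1; funext a
  rw [Finset.sum_smul]

lemma bnorm_nonneg {n p : ℕ} (x : Fin n → EuclideanSpace ℝ (Fin p)) : 0 ≤ bnorm x :=
  Real.sqrt_nonneg _

lemma bnorm_mapp_le {n p : ℕ} (M : Matrix (Fin n) (Fin n) ℝ)
    (b : Fin n → EuclideanSpace ℝ (Fin p)) (δ : ℝ) (hδ : 0 ≤ δ)
    (hM : ∀ i j, |M i j| ≤ δ) :
    bnorm (mapp M b) ≤ (n * δ) * bnorm b := by
  have hS : 0 ≤ ∑ j, ‖b j‖ := Finset.sum_nonneg fun j _ => norm_nonneg _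
  have h1 : ∀ i, ‖mapp M b i‖ ≤ δ * ∑ j, ‖b j‖ := by
    intro i
    calc ‖∑ j, M i j • b j‖ ≤ ∑ j, ‖M i j • b j‖ := norm_sum_le _ _
      _ = ∑ j, |M i j| * ‖b j‖ := by
          congr 1; funext j; rw [norm_smul, Real.norm_eq_abs]
      _ ≤ ∑ j, δ * ‖b j‖ :=
          Finset.sum_le_sum fun j _ => mul_le_mul_of_nonneg_right (hM i j) (norm_nonneg _)
      _ = δ * ∑ j, ‖b j‖ := by rw [Finset.mul_sum]
  have h2 : (∑ j, ‖b j‖) ^ 2 ≤ (n : ℝ) * ∑ j, ‖b j‖ ^ 2 := by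
    simpa using sq_sum_le_card_mul_sum_sq (s := (Finset.univ : Finset (Fin n)))
      (f := fun j => ‖b j‖)
  have h3 : ∑ i, ‖mapp M b i‖ ^ 2 ≤ ((n : ℝ) * δ) ^ 2 * ∑ j, ‖b j‖ ^ 2 := by
    calc ∑ i, ‖mapp M b i‖ ^ 2 ≤ ∑ _i : Fin n, (δ * ∑ j, ‖b j‖) ^ 2 := by
          apply Finset.sum_le_sum
          intro i _
          exact pow_le_pow_left₀ (norm_nonneg _) (h1 i) 2
      _ = (n : ℝ) * (δ * ∑ j, ‖b j‖) ^ 2 := by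
          rw [Finset.sum_const, Finset.card_univ, Fintype.card_fin, nsmul_eq_mul]
      _ = (n : ℝ) * δ ^ 2 * (∑ j, ‖b j‖) ^ 2 := by ring
      _ ≤ (n : ℝ) * δ ^ 2 * ((n : ℝ) * ∑ j, ‖b j‖ ^ 2) := by
          apply mul_le_mul_of_nonneg_left h2; positivity
      _ = ((n : ℝ) * δ) ^ 2 * ∑ j, ‖b j‖ ^ 2 := by ring
  calc bnorm (mapp M b) ≤ Real.sqrt (((n : ℝ) * δ) ^ 2 * ∑ j, ‖b j‖ ^ 2) :=
        Real.sqrt_le_sqrt h3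
    _ = ((n : ℝ) * δ) * bnorm b := by
        rw [Real.sqrt_mul (sq_nonneg _), Real.sqrt_sq (by positivity)]
        rfl

lemma osc_mul_le {n : ℕ} (hne : (Finset.univ : Finset (Fin n)).Nonempty)
    (β : ℝ) (hβ0 : 0 ≤ β) (B N : Matrix (Fin n) (Fin n) ℝ)
    (hBrow : ∀ i, ∑ j, B i j = 1) (hBβ : ∀ i j, β ≤ B i j) (j : Fin n) :
    univ.sup' hne (fun i => (B * N) i j) - univ.inf' hne (fun i => (B * N) i j)
      ≤ (1 - β) * (univ.sup' hne (fun i => N i j) - univ.inf' hne (fun i => N i j)) := by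
  set Mx := univ.sup' hne (fun i => N i j) with hMx
  set mn := univ.inf' hne (fun i => N i j) with hmn
  have hBnn : ∀ i a, 0 ≤ B i a := fun i a => le_trans hβ0 (hBβ i a)
  have hosc0 : 0 ≤ Mx - mn := by
    obtain ⟨i0, _⟩ := hne
    have := Finset.inf'_le (fun i => N i j) (Finset.mem_univ i0)
    have := Finset.le_sup' (fun i => N i j) (Finset.mem_univ i0)
    simp only [← hMx, ← hmn] at *
    linarith
  obtain ⟨astar, -, hastar⟩ := Finset.exists_mem_eq_inf' hne (fun i => N i j)
  obtain ⟨amax, -, hamax⟩ := Finset.exists_mem_eq_sup' hne (fun i => N i j)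
  have hup : ∀ i, (B * N) i j ≤ Mx - β * (Mx - mn) := by
    intro i
    have key : (B * N) i j ≤ Mx - B i astar * (Mx - mn) := by
      rw [Matrix.mul_apply, ← Finset.add_sum_erase _ _ (Finset.mem_univ astar)]
      have hrest : ∑ a ∈ univ.erase astar, B i a * N a j
          ≤ ∑ a ∈ univ.erase astar, B i a * Mx := by
        apply Finset.sum_le_sum
        intro a _
        exact mul_le_mul_of_nonneg_left (Finset.le_sup' (fun i => N i j) (Finset.mem_univ a))
          (hBnn i a)
      have hsum : ∑ a ∈ univ.erase astar, B i a = 1 - B i astar := by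
        rw [Finset.sum_erase_eq_sub (Finset.mem_univ astar), hBrow]
      calc B i astar * N astar j + ∑ a ∈ univ.erase astar, B i a * N a j
          ≤ B i astar * mn + (1 - B i astar) * Mx := by
            rw [← hastar, ← hsum, Finset.sum_mul]; exact add_le_add_right hrest _
        _ = Mx - B i astar * (Mx - mn) := by ring
    calc (B * N) i j ≤ Mx - B i astar * (Mx - mn) := key
      _ ≤ Mx - β * (Mx - mn) := by
          have := mul_le_mul_of_nonneg_right (hBβ i astar) hosc0
          linarith
  have hlo : ∀ i, mn + β * (Mx - mn) ≤ (B * N) i j := by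
    intro i
    have key : mn + B i amax * (Mx - mn) ≤ (B * N) i j := by
      rw [Matrix.mul_apply, ← Finset.add_sum_erase _ _ (Finset.mem_univ amax)]
      have hrest : ∑ a ∈ univ.erase amax, B i a * mn
          ≤ ∑ a ∈ univ.erase amax, B i a * N a j := by
        apply Finset.sum_le_sum
        intro a _
        exact mul_le_mul_of_nonneg_left (Finset.inf'_le (fun i => N i j) (Finset.mem_univ a))
          (hBnn i a)
      have hsum : ∑ a ∈ univ.erase amax, B i a = 1 - B i amax := by
        rw [Finset.sum_erase_eq_sub (Finset.mem_univ amax), hBrow]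
      calc mn + B i amax * (Mx - mn)
          = B i amax * Mx + (1 - B i amax) * mn := by ring
        _ ≤ B i amax * N amax j + ∑ a ∈ univ.erase amax, B i a * N a j := by
            rw [← hamax, ← hsum, Finset.sum_mul] at *
            exact add_le_add_right hrest _
    calc mn + β * (Mx - mn) ≤ mn + B i amax * (Mx - mn) := by
          have := mul_le_mul_of_nonneg_right (hBβ i amax) hosc0
          linarith
      _ ≤ (B * N) i j := key
  have h1 : univ.sup' hne (fun i => (B * N) i j) ≤ Mx - β * (Mx - mn) :=
    Finset.sup'_le hne _ fun i _ => hup i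
  have h2 : mn + β * (Mx - mn) ≤ univ.inf' hne (fun i => (B * N) i j) :=
    Finset.le_inf' hne _ fun i _ => hlo i
  nlinarith [mul_nonneg hβ0 hosc0]

lemma pprod_min_entry (n C : ℕ) (hn : 1 ≤ n) (hC : 1 ≤ C)
    (α : ℝ) (hα : α ∈ Set.Ioo (0 : ℝ) 1)
    (E : ℕ → Set (Fin n × Fin n))
    (hself : ∀ k (i : Fin n), (i, i) ∈ E k)
    (hconn : ∀ k, StronglyConnected (⋃ l ∈ Finset.Icc k (k + C - 1), E l))
    (A : ℕ → Matrix (Fin n) (Fin n) ℝ)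
    (hAnn : ∀ k i j, 0 ≤ A k i j)
    (hAcomp : ∀ k i j, 0 < A k i j ↔ (i, j) ∈ E k)
    (hAα : ∀ k i j, (i, j) ∈ E k → α ≤ A k i j)
    (s : ℕ) (i0 j : Fin n) :
    α ^ (n * C) ≤ pprod A s (n * C) i0 j := by
  have hα0 : 0 < α := hα.1
  have hpos : ∀ t i, 0 < pprod A s t i j → α ^ t ≤ pprod A s t i j := by
    intro t
    induction t with
    | zero =>
        intro i h
        rw [pprod_zero] at h ⊢
        by_cases hij : i = j
        · simp [Matrix.one_apply, hij]
        · simp [Matrix.one_apply, hij] at h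
    | succ t ih =>
        intro i h
        rw [pprod_succ, Matrix.mul_apply] at h ⊢
        obtain ⟨a, -, ha⟩ : ∃ a ∈ Finset.univ, (0 : ℝ) < A (s + t) i a * pprod A s t a j := by
          apply Finset.exists_lt_of_sum_lt
          simpa using h
        have hA : 0 < A (s + t) i a := by
          rcases lt_or_ge 0 (A (s + t) i a) with h1 | h1
          · exact h1
          · exfalso
            have : A (s + t) i a = 0 := le_antisymm h1 (hAnn _ _ _)
            rw [this, zero_mul] at ha; exact lt_irrefl 0 ha
        have hP : 0 < pprod A s t a j := by
          rcases lt_or_ge 0 (pprod A s t a j) with h1 | h1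
          · exact h1
          · exfalso; nlinarith
        calc α ^ (t + 1) = α * α ^ t := by ring
          _ ≤ A (s + t) i a * pprod A s t a j := by
              apply mul_le_mul (hAα _ _ _ ((hAcomp _ _ _).mp hA)) (ih a hP)
                (le_of_lt (pow_pos hα0 t))
                (le_trans (le_of_lt hα0) (hAα _ _ _ ((hAcomp _ _ _).mp hA)))
          _ ≤ ∑ a', A (s + t) i a' * pprod A s t a' j :=
              Finset.single_le_sum (f := fun a' => A (s + t) i a' * pprod A s t a' j)
                (fun a' _ => mul_nonneg (hAnn _ _ _) (pprod_nonneg hAnn _ _ _ _))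
                (Finset.mem_univ a)
  have hstep : ∀ t i, 0 < pprod A s t i j → 0 < pprod A s (t + 1) i j := by
    intro t i h
    rw [pprod_succ, Matrix.mul_apply]
    apply Finset.sum_pos' (fun a _ => mul_nonneg (hAnn _ _ _) (pprod_nonneg hAnn _ _ _ _))
    refine ⟨i, Finset.mem_univ i, mul_pos ?_ h⟩
    exact lt_of_lt_of_le hα0 (hAα _ _ _ (hself _ i))
  have hmono : ∀ t t', t ≤ t' → ∀ i, 0 < pprod A s t i j → 0 < pprod A s t' i j := by
    intro t t' h
    induction h with
    | refl => exact fun i h => h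
    | step _ ih => exact fun i hi => hstep _ i (ih i hi)
  have hj0 : 0 < pprod A s 0 j j := by rw [pprod_zero]; simp [Matrix.one_apply]
  have hgrow : ∀ t, (∃ i, ¬ 0 < pprod A s t i j) →
      ∃ b, ¬ 0 < pprod A s t b j ∧ 0 < pprod A s (t + C) b j := by
    intro t ⟨i, hi⟩
    have hij : i ≠ j := by
      intro h; subst h
      exact hi (hmono 0 t (Nat.zero_le t) i hj0)
    have hpath := hconn (s + t) i j hij
    obtain ⟨a, b, ha, hb, hr⟩ := transGen_cross (S := {x | 0 < pprod A s t x j}) hpath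
      (hmono 0 t (Nat.zero_le t) j hj0) hi
    simp only [Set.mem_iUnion] at hr
    obtain ⟨l, hl, hE⟩ := hr
    rw [Finset.mem_Icc] at hl
    have hl1 : s + t ≤ l := hl.1
    have hl2 : l ≤ s + t + C - 1 := hl.2
    set u := l - s with hu
    have hsu : s + u = l := by omega
    have htu : t ≤ u := by omega
    have hu1 : u + 1 ≤ t + C := by omega
    refine ⟨b, hb, hmono (u + 1) (t + C) hu1 b ?_⟩
    rw [pprod_succ, hsu, Matrix.mul_apply]
    apply Finset.sum_pos' (fun c _ => mul_nonneg (hAnn _ _ _) (pprod_nonneg hAnn _ _ _ _))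
    exact ⟨a, Finset.mem_univ a, mul_pos ((hAcomp _ _ _).mpr hE) (hmono t u htu a ha)⟩
  have hcard : ∀ m : ℕ,
      min n (m + 1) ≤ (univ.filter fun i => 0 < pprod A s (m * C) i j).card := by
    intro m
    induction m with
    | zero =>
        have hmem : j ∈ univ.filter fun i => 0 < pprod A s (0 * C) i j := by
          simp only [Finset.mem_filter, Finset.mem_univ, true_and, Nat.zero_mul]
          exact hj0
        have := Finset.card_pos.mpr ⟨j, hmem⟩
        omega
    | succ m ih =>
        by_cases hall : ∀ i, 0 < pprod A s (m * C) i j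
        · have hall' : ∀ i, 0 < pprod A s ((m + 1) * C) i j := by
            intro i
            exact hmono (m * C) ((m + 1) * C) (by nlinarith) i (hall i)
          have heq : (univ.filter fun i => 0 < pprod A s ((m + 1) * C) i j) = univ := by
            apply Finset.filter_true_of_mem; intro i _; exact hall' i
          rw [heq, Finset.card_univ, Fintype.card_fin]
          omega
        · push_neg at hall
          obtain ⟨b, hb, hbpos⟩ := hgrow (m * C) (by
            obtain ⟨i, hi⟩ := hall; exact ⟨i, not_lt.mpr hi⟩)
          have hsub : (univ.filter fun i => 0 < pprod A s (m * C) i j)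
              ⊆ (univ.filter fun i => 0 < pprod A s ((m + 1) * C) i j) := by
            intro i hi
            simp only [Finset.mem_filter, Finset.mem_univ, true_and] at hi ⊢
            exact hmono (m * C) ((m + 1) * C) (by nlinarith) i hi
          have hbmem : b ∈ (univ.filter fun i => 0 < pprod A s ((m + 1) * C) i j) := by
            simp only [Finset.mem_filter, Finset.mem_univ, true_and]
            have : (m + 1) * C = m * C + C := by ring
            rw [this]; exact hbpos
          have hbnot : b ∉ (univ.filter fun i => 0 < pprod A s (m * C) i j) := by
            simp only [Finset.mem_filter, Finset.mem_univ, true_and]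
            exact hb
          have hss : (univ.filter fun i => 0 < pprod A s (m * C) i j)
              ⊂ (univ.filter fun i => 0 < pprod A s ((m + 1) * C) i j) :=
            Finset.ssubset_iff_of_subset hsub |>.mpr ⟨b, hbmem, hbnot⟩
          have := Finset.card_lt_card hss
          omega
  have hfin := hcard n
  have hle : (univ.filter fun i => 0 < pprod A s (n * C) i j).card ≤ n := by
    have := Finset.card_le_card (Finset.subset_univ
      (univ.filter fun i => 0 < pprod A s (n * C) i j))
    simpa using this
  have hcardeq : (univ.filter fun i => 0 < pprod A s (n * C) i j).card = n := by omega
  have huniv : (univ.filter fun i => 0 < pprod A s (n * C) i j) = univ := by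
    apply Finset.eq_univ_of_card
    rw [hcardeq, Fintype.card_fin]
  have hmem : i0 ∈ (univ.filter fun i => 0 < pprod A s (n * C) i j) := by
    rw [huniv]; exact Finset.mem_univ i0
  simp only [Finset.mem_filter, Finset.mem_univ, true_and] at hmem
  exact hpos (n * C) i0 hmem

lemma osc_pprod (n C : ℕ) (hn : 1 ≤ n) (hC : 1 ≤ C)
    (α : ℝ) (hα : α ∈ Set.Ioo (0 : ℝ) 1)
    (E : ℕ → Set (Fin n × Fin n))
    (hself : ∀ k (i : Fin n), (i, i) ∈ E k)
    (hconn : ∀ k, StronglyConnected (⋃ l ∈ Finset.Icc k (k + C - 1), E l))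
    (A : ℕ → Matrix (Fin n) (Fin n) ℝ)
    (hAnn : ∀ k i j, 0 ≤ A k i j) (hArow : ∀ k i, ∑ j, A k i j = 1)
    (hAcomp : ∀ k i j, 0 < A k i j ↔ (i, j) ∈ E k)
    (hAα : ∀ k i j, (i, j) ∈ E k → α ≤ A k i j)
    (hne : (Finset.univ : Finset (Fin n)).Nonempty) :
    ∀ L lo j, univ.sup' hne (fun i => pprod A lo L i j)
        - univ.inf' hne (fun i => pprod A lo L i j)
      ≤ (1 - α ^ (n * C)) ^ (L / (n * C)) := by
  intro L
  induction L using Nat.strong_induction_on with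
  | _ L ih =>
    intro lo j
    by_cases hL : L < n * C
    · rw [Nat.div_eq_of_lt hL, pow_zero]
      have h1 : univ.sup' hne (fun i => pprod A lo L i j) ≤ 1 :=
        Finset.sup'_le hne _ fun i _ => pprod_le_one hAnn hArow lo L i j
      have h2 : (0 : ℝ) ≤ univ.inf' hne (fun i => pprod A lo L i j) :=
        Finset.le_inf' hne _ fun i _ => pprod_nonneg hAnn lo L i j
      linarith
    · push_neg at hL
      have hnC : 0 < n * C := Nat.mul_pos (by omega) (by omega)
      obtain ⟨M, rfl⟩ : ∃ M, L = M + n * C := ⟨L - n * C, by omega⟩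
      have hM : M < M + n * C := by omega
      have hβ0 : (0 : ℝ) ≤ α ^ (n * C) := le_of_lt (pow_pos hα.1 _)
      have hβ1 : α ^ (n * C) ≤ 1 := pow_le_one₀ (le_of_lt hα.1) (le_of_lt hα.2)
      rw [pprod_add, Nat.add_div_right M hnC, pow_succ]
      calc univ.sup' hne (fun i => (pprod A (lo + M) (n * C) * pprod A lo M) i j)
            - univ.inf' hne (fun i => (pprod A (lo + M) (n * C) * pprod A lo M) i j)
          ≤ (1 - α ^ (n * C)) * (univ.sup' hne (fun i => pprod A lo M i j)
              - univ.inf' hne (fun i => pprod A lo M i j)) :=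
            osc_mul_le hne _ hβ0 _ _ (pprod_rowsum hArow _ _)
              (fun i j' => pprod_min_entry n C hn hC α hα E hself hconn A hAnn hAcomp hAα
                (lo + M) i j') j
        _ ≤ (1 - α ^ (n * C)) * (1 - α ^ (n * C)) ^ (M / (n * C)) := by
            apply mul_le_mul_of_nonneg_left (ih M hM lo j)
            linarith
        _ = (1 - α ^ (n * C)) ^ (M / (n * C)) * (1 - α ^ (n * C)) := by ring


/-- `C̄_A`-step contraction for the sequence of row-stochastic matrices `(A_k)`
(Lemma 8 / Lemma 5.3 of DIGing). -/
theorem stmt12 (n p C : ℕ) (hn : 1 ≤ n) (hp : 1 ≤ p) (hC : 1 ≤ C)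
    (α : ℝ) (hα : α ∈ Set.Ioo (0 : ℝ) 1)
    (E : ℕ → Set (Fin n × Fin n))
    (hself : ∀ k (i : Fin n), (i, i) ∈ E k)
    (hconn : ∀ k, StronglyConnected (⋃ l ∈ Finset.Icc k (k + C - 1), E l))
    (A : ℕ → Matrix (Fin n) (Fin n) ℝ)
    (hAnn : ∀ k i j, 0 ≤ A k i j) (hArow : ∀ k i, ∑ j, A k i j = 1)
    (hAcomp : ∀ k i j, 0 < A k i j ↔ (i, j) ∈ E k)
    (hAα : ∀ k i j, (i, j) ∈ E k → α ≤ A k i j)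
    (φ : ℕ → Fin n → ℝ)
    (hφst : ∀ k, (∀ i, 0 ≤ φ k i) ∧ ∑ i, φ k i = 1)
    (hφabs : ∀ k, φ k = Matrix.vecMul (φ (k + 1)) (A k))
    (QA : ℝ) (hQA : QA = 2 * n * (1 + (α ^ (n * C))⁻¹) / (1 - α ^ (n * C)))
    (CbA : ℕ) (hCbA : C ≤ CbA)
    (γA : ℝ)
    (hγA : γA = QA * (1 - α ^ (n * C)) ^ (((CbA : ℝ) - 1) / ((n : ℝ) * C)))
    (hγA1 : γA < 1) :
    ∀ k, CbA - 1 ≤ k → ∀ b : Fin n → EuclideanSpace ℝ (Fin p),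
      bnorm (mapp (proj (φ (k + 1))) (mapp (bprod A (k + 1 - CbA) k) b)) ≤
        γA * bnorm (mapp (proj (φ (k + 1 - CbA))) b) := by
  intro k hk b
  have hCbA1 : 1 ≤ CbA := le_trans hC hCbA
  have hnC : 0 < n * C := Nat.mul_pos (by omega) (by omega)
  have hne : (Finset.univ : Finset (Fin n)).Nonempty := ⟨⟨0, by omega⟩, Finset.mem_univ _⟩
  have hβ0 : (0 : ℝ) < α ^ (n * C) := pow_pos hα.1 _
  have hβ1 : α ^ (n * C) < 1 := pow_lt_one₀ (le_of_lt hα.1) hα.2 (by omega)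
  set β := α ^ (n * C) with hβ
  set lo := k + 1 - CbA with hlo
  have hlok : lo + CbA = k + 1 := by omega
  have hbprod : bprod A lo k = pprod A lo CbA := by
    simp only [bprod, pprod, show k + 1 - lo = CbA by omega]
  set P := pprod A lo CbA with hP
  -- absolute probability sequence chain
  have hchain : ∀ L lo', Matrix.vecMul (φ (lo' + L)) (pprod A lo' L) = φ lo' := by
    intro L
    induction L with
    | zero => intro lo'; simp [pprod_zero]
    | succ L ih =>
        intro lo'
        rw [pprod_succ, ← Matrix.vecMul_vecMul,
          show lo' + (L + 1) = (lo' + L) + 1 from rfl, ← hφabs (lo' + L), ih]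
  have hφP : Matrix.vecMul (φ (k + 1)) P = φ lo := by
    rw [hP, ← hlok]; exact hchain CbA lo
  set N := proj (φ (k + 1)) * P with hN
  have hNentry : ∀ i j, N i j = P i j - φ lo j := by
    intro i j
    rw [hN, ← hφP]
    simp only [proj, Matrix.sub_mul, Matrix.one_mul, Matrix.sub_apply, Matrix.mul_apply,
      Matrix.vecMulVec_apply, Matrix.vecMul, dotProduct, one_mul, sub_mul,
      Finset.sum_sub_distrib, Matrix.one_apply, ite_mul, zero_mul, Finset.sum_ite_eq,
      Finset.mem_univ, if_true]
  have hNrow : ∀ i, ∑ j', N i j' = 0 := by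
    intro i
    simp only [hNentry]
    rw [Finset.sum_sub_distrib, pprod_rowsum hArow, (hφst lo).2]
    ring
  have hNproj : N * proj (φ lo) = N := by
    ext i j
    rw [Matrix.mul_apply]
    simp only [proj, Matrix.sub_apply, Matrix.one_apply, Matrix.vecMulVec_apply, one_mul]
    calc ∑ a, N i a * ((if a = j then (1 : ℝ) else 0) - φ lo j)
        = ∑ a, ((if a = j then N i a else 0) - N i a * φ lo j) := by
          apply Finset.sum_congr rfl; intro a _
          by_cases h : a = j <;> simp [h] <;> ring
      _ = N i j - (∑ a, N i a) * φ lo j := by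
          rw [Finset.sum_sub_distrib, Finset.sum_ite_eq' Finset.univ j (fun a => N i a),
            Finset.sum_mul]
          simp
      _ = N i j := by rw [hNrow i]; ring
  -- rewrite the LHS
  have hLHS : mapp (proj (φ (k + 1))) (mapp (bprod A lo k) b)
      = mapp N (mapp (proj (φ lo)) b) := by
    rw [mapp_mapp, hbprod, ← hN, mapp_mapp, hNproj]
  -- oscillation bound for P
  have hosc := osc_pprod n C hn hC α hα E hself hconn A hAnn hArow hAcomp hAα hne CbA lo
  set m := CbA / (n * C) with hm
  have hδ0 : (0 : ℝ) ≤ (1 - β) ^ m := pow_nonneg (by linarith) m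
  have hδ : ∀ i j, |N i j| ≤ (1 - β) ^ m := by
    intro i j
    have h5 := hosc j
    rw [← hP] at h5
    have h3 : P i j ≤ univ.sup' hne (fun i' => P i' j) :=
      Finset.le_sup' (fun i' => P i' j) (Finset.mem_univ i)
    have h4 : univ.inf' hne (fun i' => P i' j) ≤ P i j :=
      Finset.inf'_le (fun i' => P i' j) (Finset.mem_univ i)
    have hφlo : φ lo j = ∑ a, φ (k + 1) a * P a j := by
      rw [← hφP]; simp [Matrix.vecMul, dotProduct]
    have hup : φ lo j ≤ univ.sup' hne (fun i' => P i' j) := by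
      rw [hφlo]
      calc ∑ a, φ (k + 1) a * P a j
          ≤ ∑ a, φ (k + 1) a * univ.sup' hne (fun i' => P i' j) :=
            Finset.sum_le_sum fun a _ => mul_le_mul_of_nonneg_left
              (Finset.le_sup' (fun i' => P i' j) (Finset.mem_univ a)) ((hφst (k + 1)).1 a)
        _ = univ.sup' hne (fun i' => P i' j) := by
            rw [← Finset.sum_mul, (hφst (k + 1)).2, one_mul]
    have hlo2 : univ.inf' hne (fun i' => P i' j) ≤ φ lo j := by
      rw [hφlo]
      calc univ.inf' hne (fun i' => P i' j)
          = ∑ a, φ (k + 1) a * univ.inf' hne (fun i' => P i' j) := by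
            rw [← Finset.sum_mul, (hφst (k + 1)).2, one_mul]
        _ ≤ ∑ a, φ (k + 1) a * P a j :=
            Finset.sum_le_sum fun a _ => mul_le_mul_of_nonneg_left
              (Finset.inf'_le (fun i' => P i' j) (Finset.mem_univ a)) ((hφst (k + 1)).1 a)
    rw [hNentry i j, abs_le]
    constructor <;> linarith
  -- numeric comparison
  have ht0 : (0 : ℝ) < 1 - β := by linarith
  have ht1 : 1 - β ≤ 1 := by linarith
  have hnCR : (0 : ℝ) < (n : ℝ) * C := by
    have : (0 : ℝ) < (n : ℝ) := by exact_mod_cast (by omega : 0 < n)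
    have : (0 : ℝ) < (C : ℝ) := by exact_mod_cast (by omega : 0 < C)
    positivity
  have hQA0 : (0 : ℝ) ≤ QA := by
    rw [hQA]
    have h1 : (0 : ℝ) ≤ (n : ℝ) := Nat.cast_nonneg n
    have h2 : (0 : ℝ) ≤ β⁻¹ := inv_nonneg.mpr (le_of_lt hβ0)
    apply div_nonneg (by nlinarith) (by linarith)
  have hCbAlt : CbA < n * C * m + n * C := by
    rw [hm]
    have h1 := Nat.div_add_mod CbA (n * C)
    have h2 := Nat.mod_lt CbA hnC
    omega
  have he : ((CbA : ℝ) - 1) / ((n : ℝ) * C) ≤ (m : ℝ) + 1 := by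
    rw [div_le_iff₀ hnCR]
    have h2 : (CbA : ℝ) < (n : ℝ) * (C : ℝ) * (m : ℝ) + (n : ℝ) * (C : ℝ) := by
      exact_mod_cast hCbAlt
    nlinarith
  have hrpow : (1 - β) ^ (((m : ℝ) + 1)) ≤ (1 - β) ^ (((CbA : ℝ) - 1) / ((n : ℝ) * C)) :=
    Real.rpow_le_rpow_of_exponent_ge ht0 ht1 he
  have hid : (1 - β) ^ ((m : ℝ) + 1) = (1 - β) ^ (m + 1 : ℕ) := by
    rw [show ((m : ℝ) + 1) = ((m + 1 : ℕ) : ℝ) by push_cast; ring, Real.rpow_natCast]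
  have hnum : (n : ℝ) * (1 - β) ^ m ≤ γA := by
    rw [hγA, hQA]
    calc (n : ℝ) * (1 - β) ^ m
        ≤ 2 * (n : ℝ) * (1 + β⁻¹) / (1 - β) * (1 - β) ^ (m + 1 : ℕ) := by
          have heq : 2 * (n : ℝ) * (1 + β⁻¹) / (1 - β) * (1 - β) ^ (m + 1 : ℕ)
              = 2 * (n : ℝ) * (1 + β⁻¹) * (1 - β) ^ m := by
            rw [pow_succ]
            field_simp
          rw [heq]
          have h7 : (1 : ℝ) ≤ 2 * (1 + β⁻¹) := by
            have := inv_nonneg.mpr (le_of_lt hβ0)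
            linarith
          have h8 : (n : ℝ) * (1 - β) ^ m ≤ (2 * (1 + β⁻¹)) * ((n : ℝ) * (1 - β) ^ m) :=
            le_mul_of_one_le_left (mul_nonneg (Nat.cast_nonneg n) hδ0) h7
          exact le_trans h8 (le_of_eq (by ring))
      _ ≤ 2 * (n : ℝ) * (1 + β⁻¹) / (1 - β)
            * (1 - β) ^ (((CbA : ℝ) - 1) / ((n : ℝ) * C)) := by
          rw [← hid]
          apply mul_le_mul_of_nonneg_left hrpow
          rw [hQA] at hQA0
          exact hQA0
  -- conclusion
  rw [hLHS]
  calc bnorm (mapp N (mapp (proj (φ lo)) b))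
      ≤ ((n : ℝ) * (1 - β) ^ m) * bnorm (mapp (proj (φ lo)) b) :=
        bnorm_mapp_le N _ _ hδ0 hδ
    _ ≤ γA * bnorm (mapp (proj (φ lo)) b) :=
        mul_le_mul_of_nonneg_right hnum (bnorm_nonneg _)
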